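/- Let (σₙ,τ₀ₙ,τ₁ₙ)_{n≥0} be an arbitrary sequence of triples of permutations in S₃ and let i : ℕ → {0,1} be any sequence. Suppose there is a constant C > 0 such that for every n ≥ 0 and every pair j, j' ∈ {1,2,3} one has x_{n,j} ≤ C·x_{n,j'}. Then the intersection Δ(i₀,i₁,…) = ⋂_{n≥0} Δ(i₀,…,iₙ) is a singleton. -/

import Mathlib

open Matrix

noncomputable section

/-- `A₀ = ![![0,0,1],![1,0,0],![0,1,1]]`. -/
def A0 : Matrix (Fin 3) (Fin 3) ℝ := !![0,0,1; 1,0,0; 0,1,1]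
/-- `A₁ = ![![1,0,1],![0,1,0],![0,0,1]]`. -/
def A1 : Matrix (Fin 3) (Fin 3) ℝ := !![1,0,1; 0,1,0; 0,0,1]
/-- `B = ![![1,1,1],![0,1,1],![0,0,1]]`. -/
def Bm : Matrix (Fin 3) (Fin 3) ℝ := !![1,1,1; 0,1,1; 0,0,1]

/-- The permutation matrix of `ρ`: entry `(i,j)` is `1` iff `ρ i = j`.  In particular
`P (finRotate 3)`, the matrix of the cycle `(1 2 3)`, is `![![0,1,0],![0,0,1],![1,0,0]]`. -/
def P (ρ : Equiv.Perm (Fin 3)) : Matrix (Fin 3) (Fin 3) ℝ := ρ.permMatrix ℝ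

/-- The pair of TRIP matrices `F₀ = P_σ·A₀·P_{τ₀}`, `F₁ = P_σ·A₁·P_{τ₁}` of a triple
of permutations, as a function `Fin 2 → Matrix`. -/
def Fmat (σ τ0 τ1 : Equiv.Perm (Fin 3)) : Fin 2 → Matrix (Fin 3) (Fin 3) ℝ :=
  ![P σ * A0 * P τ0, P σ * A1 * P τ1]

/-- `prodMat G n = B · (G 0) · (G 1) ⋯ (G n)`. -/
def prodMat (G : ℕ → Matrix (Fin 3) (Fin 3) ℝ) (n : ℕ) : Matrix (Fin 3) (Fin 3) ℝ :=
  Bm * ((List.range (n+1)).map G).prod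

/-- The triangle `Δ(i₀,…,iₙ)`: the convex hull of the images under
`π(x₀,x₁,x₂) = (x₁/x₀, x₂/x₀)` of the three columns of `M`. -/
def tri (M : Matrix (Fin 3) (Fin 3) ℝ) : Set (ℝ × ℝ) :=
  convexHull ℝ {p | ∃ j : Fin 3, p = (M 1 j / M 0 j, M 2 j / M 0 j)}

/-- `Δ(i₀,i₁,…) = ⋂ₙ Δ(i₀,…,iₙ)`, for the sequence of matrices `G m = F_{i_m}`. -/
def DeltaInf (G : ℕ → Matrix (Fin 3) (Fin 3) ℝ) : Set (ℝ × ℝ) :=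
  ⋂ n : ℕ, tri (prodMat G n)

lemma P_apply (σ : Equiv.Perm (Fin 3)) (i j : Fin 3) :
    P σ i j = if σ i = j then 1 else 0 := by
  simp [P, Equiv.Perm.permMatrix, PEquiv.toMatrix_apply, Equiv.toPEquiv, eq_comm]

lemma mul3_apply (σ τ : Equiv.Perm (Fin 3)) (A : Matrix (Fin 3) (Fin 3) ℝ) (k j : Fin 3) :
    (P σ * A * P τ) k j = A (σ k) (τ.symm j) := by
  rw [Matrix.mul_apply]
  have h1 : ∀ m, (P σ * A) k m = A (σ k) m := by
    intro m
    rw [Matrix.mul_apply]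
    simp only [P_apply, ite_mul, one_mul, zero_mul]
    rw [Finset.sum_ite_eq]
    simp
  simp only [h1, P_apply]
  have : ∀ m : Fin 3, (τ m = j) = (m = τ.symm j) := by
    intro m; simp [Equiv.eq_symm_apply, eq_comm]
  simp only [mul_ite, mul_one, mul_zero, this]
  rw [Finset.sum_ite_eq']
  simp

/-- structural form of the TRIP matrices: all columns are standard basis vectors except
column `j₀` which is `e k₁ + e k₂`, with the "dropped" row `ρ j₀` among `{k₁, k₂}`. -/
def ColStruct (F : Matrix (Fin 3) (Fin 3) ℝ) : Prop :=
  ∃ (ρ : Equiv.Perm (Fin 3)) (j₀ k₁ k₂ : Fin 3), k₁ ≠ k₂ ∧ (ρ j₀ = k₁ ∨ ρ j₀ = k₂) ∧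
    (∀ j, j ≠ j₀ → ∀ k, F k j = if k = ρ j then 1 else 0) ∧
    (∀ k, F k j₀ = if k = k₁ ∨ k = k₂ then 1 else 0)

lemma colStruct_A0 : ColStruct A0 := by
  refine ⟨finRotate 3, 2, 0, 2, by decide, by simp, ?_, ?_⟩
  · intro j hj k
    fin_cases j
    · fin_cases k <;> norm_num [A0, Fin.ext_iff]
    · fin_cases k <;> norm_num [A0, Fin.ext_iff] <;> decide
    · simp at hj
  · intro k; fin_cases k <;> norm_num [A0, Fin.ext_iff] <;> rfl

lemma colStruct_A1 : ColStruct A1 := by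
  refine ⟨1, 2, 0, 2, by decide, by simp, ?_, ?_⟩
  · intro j hj k
    fin_cases j
    · fin_cases k <;> norm_num [A1, Fin.ext_iff]
    · fin_cases k <;> norm_num [A1, Fin.ext_iff]
    · simp at hj
  · intro k; fin_cases k <;> norm_num [A1, Fin.ext_iff] <;> rfl

lemma colStruct_conj (σ τ : Equiv.Perm (Fin 3)) {A : Matrix (Fin 3) (Fin 3) ℝ}
    (hA : ColStruct A) : ColStruct (P σ * A * P τ) := by
  obtain ⟨ρ, j₀, k₁, k₂, hne, hmem, hcol, hcol0⟩ := hA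
  refine ⟨(τ.symm.trans ρ).trans σ.symm, τ j₀, σ.symm k₁, σ.symm k₂,
    fun h => hne (σ.symm.injective h), ?_, ?_, ?_⟩
  · simp only [Equiv.trans_apply, Equiv.symm_apply_apply]
    rcases hmem with h | h
    · left; rw [h]
    · right; rw [h]
  · intro j hj k
    rw [mul3_apply]
    have hj' : τ.symm j ≠ j₀ := fun h => hj (by rw [← h, Equiv.apply_symm_apply])
    rw [hcol _ hj']
    simp only [Equiv.trans_apply]
    congr 1
    simp [Equiv.eq_symm_apply, eq_comm]
  · intro k
    rw [mul3_apply]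
    simp only [Equiv.symm_apply_apply]
    rw [hcol0]
    congr 1
    simp [Equiv.eq_symm_apply, eq_comm]

lemma colStruct_Fmat (σ τ0 τ1 : Equiv.Perm (Fin 3)) (i : Fin 2) :
    ColStruct (Fmat σ τ0 τ1 i) := by
  fin_cases i
  · exact colStruct_conj σ τ0 colStruct_A0
  · exact colStruct_conj σ τ1 colStruct_A1
/-- Transition structure between consecutive matrices: columns of `B` are obtained from
columns of `A` by a permutation, except column `j₀` which is the sum of columns `k₁, k₂`. -/
def StepRel (A B : Matrix (Fin 3) (Fin 3) ℝ) : Prop :=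
  ∃ (ρ : Equiv.Perm (Fin 3)) (j₀ k₁ k₂ : Fin 3), k₁ ≠ k₂ ∧ (ρ j₀ = k₁ ∨ ρ j₀ = k₂) ∧
    (∀ r j, j ≠ j₀ → B r j = A r (ρ j)) ∧ (∀ r, B r j₀ = A r k₁ + A r k₂)

lemma stepRel_of_colStruct {F : Matrix (Fin 3) (Fin 3) ℝ} (hF : ColStruct F)
    (A : Matrix (Fin 3) (Fin 3) ℝ) : StepRel A (A * F) := by
  obtain ⟨ρ, j₀, k₁, k₂, hne, hmem, hcol, hcol0⟩ := hF
  refine ⟨ρ, j₀, k₁, k₂, hne, hmem, ?_, ?_⟩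
  · intro r j hj
    rw [Matrix.mul_apply]
    simp only [hcol j hj, mul_ite, mul_one, mul_zero]
    rw [Finset.sum_ite_eq']
    simp
  · intro r
    rw [Matrix.mul_apply]
    have : ∀ k, F k j₀ = (if k = k₁ then (1:ℝ) else 0) + (if k = k₂ then 1 else 0) := by
      intro k
      rw [hcol0]
      by_cases h1 : k = k₁ <;> by_cases h2 : k = k₂ <;> simp_all
    simp only [this, mul_add, Finset.sum_add_distrib, mul_ite, mul_one, mul_zero]
    rw [Finset.sum_ite_eq', Finset.sum_ite_eq']
    simp

lemma prodMat_zero (G : ℕ → Matrix (Fin 3) (Fin 3) ℝ) : prodMat G 0 = Bm * G 0 := by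
  simp [prodMat, List.range_succ]

lemma prodMat_succ (G : ℕ → Matrix (Fin 3) (Fin 3) ℝ) (n : ℕ) :
    prodMat G (n+1) = prodMat G n * G (n+1) := by
  rw [prodMat, prodMat, List.range_succ, List.map_append, List.prod_append]
  simp [Matrix.mul_assoc]

lemma stepRel_pos {A B : Matrix (Fin 3) (Fin 3) ℝ} (h : StepRel A B)
    (hA : ∀ k, 0 < A 0 k) : ∀ j, 0 < B 0 j := by
  obtain ⟨ρ, j₀, k₁, k₂, hne, hmem, hcopy, hmix⟩ := h
  intro j
  by_cases hj : j = j₀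
  · rw [hj, hmix]; exact add_pos (hA k₁) (hA k₂)
  · rw [hcopy 0 j hj]; exact hA _

lemma prodMat_pos {G : ℕ → Matrix (Fin 3) (Fin 3) ℝ} (hG : ∀ m, ColStruct (G m)) :
    ∀ n j, 0 < prodMat G n 0 j := by
  intro n
  induction n with
  | zero =>
      rw [prodMat_zero]
      exact stepRel_pos (stepRel_of_colStruct (hG 0) Bm)
        (by intro k; fin_cases k <;> norm_num [Bm])
  | succ n ih =>
      rw [prodMat_succ]
      exact stepRel_pos (stepRel_of_colStruct (hG (n+1)) _) ih

lemma prodMat_stepRel {G : ℕ → Matrix (Fin 3) (Fin 3) ℝ} (hG : ∀ m, ColStruct (G m)) (n : ℕ) :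
    StepRel (prodMat G n) (prodMat G (n+1)) := by
  rw [prodMat_succ]
  exact stepRel_of_colStruct (hG (n+1)) _
lemma dobrushin (p q x : Fin 3 → ℝ) (hp : ∀ k, 0 ≤ p k) (hq : ∀ k, 0 ≤ q k)
    (hps : ∑ k, p k = 1) (hqs : ∑ k, q k = 1) (δ D : ℝ) (hδ1 : δ ≤ 1)
    (hover : ∃ k, δ ≤ p k ∧ δ ≤ q k) (hD : ∀ k l, |x k - x l| ≤ D) :
    |∑ k, p k * x k - ∑ k, q k * x k| ≤ (1 - δ) * D := by
  have hD0 : 0 ≤ D := le_trans (abs_nonneg _) (hD 0 0)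
  set m : Fin 3 → ℝ := fun k => min (p k) (q k) with hm
  set u : Fin 3 → ℝ := fun k => p k - m k with hu
  set v : Fin 3 → ℝ := fun k => q k - m k with hv
  have hu0 : ∀ k, 0 ≤ u k := fun k => by simp [hu, hm]
  have hv0 : ∀ k, 0 ≤ v k := fun k => by simp [hv, hm]
  set c : ℝ := ∑ k, m k with hc
  have hus : ∑ k, u k = 1 - c := by
    simp only [hu]; rw [Finset.sum_sub_distrib, hps]
  have hvs : ∑ k, v k = 1 - c := by
    simp only [hv]; rw [Finset.sum_sub_distrib, hqs]
  have hcδ : δ ≤ c := by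
    obtain ⟨k0, hk1, hk2⟩ := hover
    have : δ ≤ m k0 := le_min hk1 hk2
    have h2 : m k0 ≤ c := by
      apply Finset.single_le_sum (f := m) (fun k _ => ?_) (Finset.mem_univ k0)
      exact le_min (hp k) (hq k)
    linarith
  have hc1 : c ≤ 1 := by
    have : ∀ k, m k ≤ p k := fun k => min_le_left _ _
    calc c ≤ ∑ k, p k := Finset.sum_le_sum (fun k _ => this k)
    _ = 1 := hps
  have hdiff : ∑ k, p k * x k - ∑ k, q k * x k = ∑ k, u k * x k - ∑ k, v k * x k := by
    simp only [hu, hv, sub_mul]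
    rw [Finset.sum_sub_distrib, Finset.sum_sub_distrib]
    ring
  have key : |∑ k, u k * x k - ∑ k, v k * x k| * (1 - c) ≤ (1-c) * (1-c) * D := by
    have expand : (∑ k, u k * x k - ∑ k, v k * x k) * (1 - c)
        = ∑ k, ∑ l, u k * v l * (x k - x l) := by
      have : ∀ k : Fin 3, ∑ l, u k * v l * (x k - x l)
          = u k * x k * (1 - c) - u k * (∑ l, v l * x l) := by
        intro k
        rw [← hvs, Finset.mul_sum, Finset.mul_sum, ← Finset.sum_sub_distrib]
        apply Finset.sum_congr rfl
        intro l _; ring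
      rw [Finset.sum_congr rfl (fun k _ => this k), Finset.sum_sub_distrib,
        ← Finset.sum_mul, ← Finset.sum_mul, ← hus]
      ring
    have h1c : (0:ℝ) ≤ 1 - c := by linarith
    calc |∑ k, u k * x k - ∑ k, v k * x k| * (1 - c)
        = |(∑ k, u k * x k - ∑ k, v k * x k) * (1 - c)| := by
          rw [abs_mul, abs_of_nonneg h1c]
      _ = |∑ k, ∑ l, u k * v l * (x k - x l)| := by rw [expand]
      _
        ≤ ∑ k, ∑ l, |u k * v l * (x k - x l)| := by
          refine le_trans (Finset.abs_sum_le_sum_abs _ _) ?_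
          exact Finset.sum_le_sum fun k _ => Finset.abs_sum_le_sum_abs _ _
      _ ≤ ∑ k, ∑ l, u k * v l * D := by
          refine Finset.sum_le_sum fun k _ => Finset.sum_le_sum fun l _ => ?_
          rw [abs_mul, abs_of_nonneg (mul_nonneg (hu0 k) (hv0 l))]
          exact mul_le_mul_of_nonneg_left (hD k l) (mul_nonneg (hu0 k) (hv0 l))
      _ = (1-c) * (1-c) * D := by
          simp only [← Finset.sum_mul, ← Finset.mul_sum]
          rw [hus, hvs]
  rw [hdiff]
  rcases eq_or_lt_of_le hc1 with h1 | h1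
  · have hu0' : ∀ k, u k = 0 := by
      intro k
      have := Finset.sum_eq_zero_iff_of_nonneg (fun k _ => hu0 k) |>.mp (by rw [hus, ← h1, sub_self])
      exact this k (Finset.mem_univ k)
    have hv0' : ∀ k, v k = 0 := by
      intro k
      have := Finset.sum_eq_zero_iff_of_nonneg (fun k _ => hv0 k) |>.mp (by rw [hvs, ← h1, sub_self])
      exact this k (Finset.mem_univ k)
    simp only [hu0', hv0', zero_mul, Finset.sum_const_zero, sub_zero, abs_zero]
    exact mul_nonneg (by linarith) hD0
  · have hc0 : 0 < 1 - c := by linarith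
    have key' : |∑ k, u k * x k - ∑ k, v k * x k| * (1-c) ≤ ((1-c) * D) * (1-c) := by
      nlinarith [key]
    have := le_of_mul_le_mul_right key' hc0
    calc |∑ k, u k * x k - ∑ k, v k * x k| ≤ (1-c) * D := this
      _ ≤ (1-δ) * D := mul_le_mul_of_nonneg_right (by linarith) hD0
def vx (M : ℕ → Matrix (Fin 3) (Fin 3) ℝ) (n : ℕ) (j : Fin 3) : ℝ := M n 1 j / M n 0 j
def vy (M : ℕ → Matrix (Fin 3) (Fin 3) ℝ) (n : ℕ) (j : Fin 3) : ℝ := M n 2 j / M n 0 j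

lemma window {M : ℕ → Matrix (Fin 3) (Fin 3) ℝ} {C : ℝ}
    (hstep : ∀ n, StepRel (M n) (M (n+1))) (hC : 0 < C)
    (hpos : ∀ n j, 0 < M n 0 j) (hb : ∀ n j j', M n 0 j ≤ C * M n 0 j') (a m : ℕ) :
    ∃ W : Fin 3 → Fin 3 → ℝ,
      (∀ j k, 0 ≤ W j k) ∧ (∀ j, ∑ k, W j k = 1) ∧
      (∀ j k, W j k ≠ 0 → (1/(1+C)) ^ m ≤ W j k) ∧
      (∀ j, vx M (a+m) j = ∑ k, W j k * vx M a k) ∧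
      (∀ j, vy M (a+m) j = ∑ k, W j k * vy M a k) ∧
      (∀ j, (∃ c, (∀ k, W j k = if k = c then 1 else 0) ∧ M (a+m) 0 j = M a 0 c) ∨
            (∃ k₁ k₂, k₁ ≠ k₂ ∧ W j k₁ ≠ 0 ∧ W j k₂ ≠ 0)) ∧
      (∀ j j' c, j ≠ j' → (∀ k, W j k = if k = c then 1 else 0) →
          (∀ k, W j' k = if k = c then 1 else 0) → False) := by
  have hε : 0 < 1/(1+C) := by positivity
  have hε1 : 1/(1+C) ≤ 1 := by
    rw [div_le_one (by linarith)]; linarith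
  induction m with
  | zero =>
      refine ⟨fun j k => if k = j then 1 else 0, ?_, ?_, ?_, ?_, ?_, ?_, ?_⟩
      · intro j k
        show (0:ℝ) ≤ if k = j then 1 else 0
        split <;> norm_num
      · intro j; simp
      · intro j k h
        show (1/(1+C))^0 ≤ if k = j then 1 else 0
        by_cases hkj : k = j
        · rw [if_pos hkj]; norm_num
        · exact absurd (if_neg hkj) h
      · intro j
        show vx M (a+0) j = ∑ k, (if k = j then (1:ℝ) else 0) * vx M a k
        simp only [ite_mul, one_mul, zero_mul, Finset.sum_ite_eq', Finset.mem_univ, if_true]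
        rfl
      · intro j
        show vy M (a+0) j = ∑ k, (if k = j then (1:ℝ) else 0) * vy M a k
        simp only [ite_mul, one_mul, zero_mul, Finset.sum_ite_eq', Finset.mem_univ, if_true]
        rfl
      · intro j
        exact Or.inl ⟨j, fun k => rfl, rfl⟩
      · intro j j' c hjj' hbj hbj'
        have e1 := hbj j
        have e2 := hbj' j'
        simp only [if_pos rfl] at e1 e2
        have hjc : j = c := by by_contra h; rw [if_neg h] at e1; norm_num at e1
        have hjc' : j' = c := by by_contra h; rw [if_neg h] at e2; norm_num at e2
        exact hjj' (hjc.trans hjc'.symm)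
  | succ m IH =>
      obtain ⟨W, h1, h2, h3, h4, h4y, h5, h6⟩ := IH
      obtain ⟨ρ, j₀, k₁, k₂, hk, hmem, hcopy, hmix⟩ := hstep (a+m)
      have hs₁ : 0 < M (a+m) 0 k₁ := hpos _ _
      have hs₂ : 0 < M (a+m) 0 k₂ := hpos _ _
      have hsum : 0 < M (a+m) 0 k₁ + M (a+m) 0 k₂ := by linarith
      set t : ℝ := M (a+m) 0 k₁ / (M (a+m) 0 k₁ + M (a+m) 0 k₂) with htdef
      have ht : 1/(1+C) ≤ t := by
        rw [htdef, div_le_div_iff₀ (by linarith) hsum]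
        nlinarith [hb (a+m) k₂ k₁]
      have ht' : 1/(1+C) ≤ 1 - t := by
        have h1t : 1 - t = M (a+m) 0 k₂ / (M (a+m) 0 k₁ + M (a+m) 0 k₂) := by
          rw [htdef]; field_simp; ring
        rw [h1t, div_le_div_iff₀ (by linarith) hsum]
        nlinarith [hb (a+m) k₁ k₂]
      have ht0 : 0 < t := lt_of_lt_of_le hε ht
      have ht1 : 0 < 1 - t := lt_of_lt_of_le hε ht'
      have hidx : a + (m+1) = (a+m) + 1 := rfl
      have hvx_copy : ∀ j, j ≠ j₀ → vx M (a+(m+1)) j = vx M (a+m) (ρ j) := by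
        intro j hj; unfold vx; rw [hidx, hcopy 1 j hj, hcopy 0 j hj]
      have hvy_copy : ∀ j, j ≠ j₀ → vy M (a+(m+1)) j = vy M (a+m) (ρ j) := by
        intro j hj; unfold vy; rw [hidx, hcopy 2 j hj, hcopy 0 j hj]
      have hvx_mix : vx M (a+(m+1)) j₀ = t * vx M (a+m) k₁ + (1-t) * vx M (a+m) k₂ := by
        unfold vx; rw [hidx, hmix 1, hmix 0, htdef]
        field_simp
        ring
      have hvy_mix : vy M (a+(m+1)) j₀ = t * vy M (a+m) k₁ + (1-t) * vy M (a+m) k₂ := by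
        unfold vy; rw [hidx, hmix 2, hmix 0, htdef]
        field_simp
        ring
      have hrowne : ∀ l, W k₁ l ≠ 0 ∨ W k₂ l ≠ 0 → t * W k₁ l + (1-t) * W k₂ l ≠ 0 := by
        intro l hl
        rcases hl with h | h
        · have h' : 0 < t * W k₁ l := mul_pos ht0 (lt_of_le_of_ne (h1 k₁ l) (Ne.symm h))
          have := mul_nonneg ht1.le (h1 k₂ l)
          exact ne_of_gt (by linarith)
        · have h' : 0 < (1-t) * W k₂ l := mul_pos ht1 (lt_of_le_of_ne (h1 k₂ l) (Ne.symm h))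
          have := mul_nonneg ht0.le (h1 k₁ l)
          exact ne_of_gt (by linarith)
      have hmixtwo : ∃ l₁ l₂, l₁ ≠ l₂ ∧ (t * W k₁ l₁ + (1-t) * W k₂ l₁) ≠ 0 ∧
          (t * W k₁ l₂ + (1-t) * W k₂ l₂) ≠ 0 := by
        rcases h5 k₁ with ⟨c₁, hb1, _⟩ | ⟨l₁, l₂, hl, hn1, hn2⟩
        · rcases h5 k₂ with ⟨c₂, hb2, _⟩ | ⟨l₁, l₂, hl, hn1, hn2⟩
          · have hcc : c₁ ≠ c₂ := by
              intro h; exact h6 k₁ k₂ c₁ hk hb1 (by rw [h]; exact hb2)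
            refine ⟨c₁, c₂, hcc, hrowne c₁ (Or.inl ?_), hrowne c₂ (Or.inr ?_)⟩
            · rw [hb1 c₁, if_pos rfl]; norm_num
            · rw [hb2 c₂, if_pos rfl]; norm_num
          · exact ⟨l₁, l₂, hl, hrowne l₁ (Or.inr hn1), hrowne l₂ (Or.inr hn2)⟩
        · exact ⟨l₁, l₂, hl, hrowne l₁ (Or.inl hn1), hrowne l₂ (Or.inl hn2)⟩
      set W' : Fin 3 → Fin 3 → ℝ :=
        fun j k => if j = j₀ then t * W k₁ k + (1-t) * W k₂ k else W (ρ j) k with hW'def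
      have hW'mix : ∀ k, W' j₀ k = t * W k₁ k + (1-t) * W k₂ k := by
        intro k; simp [hW'def]
      have hW'copy : ∀ j, j ≠ j₀ → ∀ k, W' j k = W (ρ j) k := by
        intro j hj k; simp only [hW'def]; exact if_neg hj
      refine ⟨W', ?_, ?_, ?_, ?_, ?_, ?_, ?_⟩
      · intro j k
        by_cases hj : j = j₀
        · rw [hj, hW'mix k]
          exact add_nonneg (mul_nonneg ht0.le (h1 k₁ k)) (mul_nonneg ht1.le (h1 k₂ k))
        · rw [hW'copy j hj k]; exact h1 _ _
      · intro j
        by_cases hj : j = j₀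
        · rw [hj]
          simp only [hW'mix]
          rw [Finset.sum_add_distrib, ← Finset.mul_sum, ← Finset.mul_sum, h2 k₁, h2 k₂]
          ring
        · simp only [hW'copy j hj]; exact h2 _
      · intro j k hne
        by_cases hj : j = j₀
        · rw [hj, hW'mix k] at hne ⊢
          have hor : W k₁ k ≠ 0 ∨ W k₂ k ≠ 0 := by
            by_contra h
            push_neg at h
            rw [h.1, h.2] at hne; simp at hne
          rw [pow_succ]
          rcases hor with h | h
          · have := mul_le_mul (h3 k₁ k h) ht hε.le (h1 k₁ k)
            nlinarith [mul_nonneg ht1.le (h1 k₂ k)]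
          · have := mul_le_mul (h3 k₂ k h) ht' hε.le (h1 k₂ k)
            nlinarith [mul_nonneg ht0.le (h1 k₁ k)]
        · rw [hW'copy j hj k] at hne ⊢
          calc (1/(1+C))^(m+1) ≤ (1/(1+C))^m :=
                pow_le_pow_of_le_one hε.le hε1 (Nat.le_succ m)
            _ ≤ W (ρ j) k := h3 _ _ hne
      · intro j
        by_cases hj : j = j₀
        · rw [hj, hvx_mix, h4 k₁, h4 k₂]
          simp only [hW'mix]
          rw [Finset.mul_sum, Finset.mul_sum, ← Finset.sum_add_distrib]
          exact Finset.sum_congr rfl fun k _ => by ring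
        · rw [hvx_copy j hj, h4 (ρ j)]
          simp only [hW'copy j hj]
      · intro j
        by_cases hj : j = j₀
        · rw [hj, hvy_mix, h4y k₁, h4y k₂]
          simp only [hW'mix]
          rw [Finset.mul_sum, Finset.mul_sum, ← Finset.sum_add_distrib]
          exact Finset.sum_congr rfl fun k _ => by ring
        · rw [hvy_copy j hj, h4y (ρ j)]
          simp only [hW'copy j hj]
      · intro j
        by_cases hj : j = j₀
        · right
          obtain ⟨l₁, l₂, hl, hn1, hn2⟩ := hmixtwo
          exact ⟨l₁, l₂, hl, by rw [hj, hW'mix l₁]; exact hn1,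
            by rw [hj, hW'mix l₂]; exact hn2⟩
        · rcases h5 (ρ j) with ⟨c, hbc, hsc⟩ | ⟨l₁, l₂, hl, hn1, hn2⟩
          · left
            refine ⟨c, fun k => by rw [hW'copy j hj k]; exact hbc k, ?_⟩
            rw [hidx, hcopy 0 j hj, hsc]
          · right
            exact ⟨l₁, l₂, hl, by rw [hW'copy j hj l₁]; exact hn1,
              by rw [hW'copy j hj l₂]; exact hn2⟩
      · intro j j' c hjj' hbj hbj'
        have hnotmix : ∀ jj, (∀ k, W' jj k = if k = c then 1 else 0) → jj ≠ j₀ := by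
          intro jj hbjj hjj0
          obtain ⟨l₁, l₂, hl, hn1, hn2⟩ := hmixtwo
          have e1 := hbjj l₁
          have e2 := hbjj l₂
          rw [hjj0, hW'mix l₁] at e1
          rw [hjj0, hW'mix l₂] at e2
          by_cases hc1 : l₁ = c
          · have hc2 : l₂ ≠ c := fun h => hl (hc1.trans h.symm)
            rw [if_neg hc2] at e2
            exact hn2 e2
          · rw [if_neg hc1] at e1
            exact hn1 e1
        have hj : j ≠ j₀ := hnotmix j hbj
        have hj' : j' ≠ j₀ := hnotmix j' hbj'
        refine h6 (ρ j) (ρ j') c (fun h => hjj' (ρ.injective h)) ?_ ?_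
        · intro k; have := hbj k; rwa [hW'copy j hj k] at this
        · intro k; have := hbj' k; rwa [hW'copy j' hj' k] at this
lemma fin3_pigeon : ∀ (a₁ a₂ b₁ b₂ : Fin 3), a₁ ≠ a₂ → b₁ ≠ b₂ →
    (a₁ = b₁ ∨ a₁ = b₂ ∨ a₂ = b₁ ∨ a₂ = b₂) := by decide

lemma sum_growth {M : ℕ → Matrix (Fin 3) (Fin 3) ℝ} {C : ℝ}
    (hstep : ∀ n, StepRel (M n) (M (n+1))) (hC : 0 < C)
    (hpos : ∀ n j, 0 < M n 0 j) (hb : ∀ n j j', M n 0 j ≤ C * M n 0 j') (n : ℕ) :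
    (1 + 1/(3*C)) * (∑ j, M n 0 j) ≤ ∑ j, M (n+1) 0 j := by
  obtain ⟨ρ, j₀, k₁, k₂, hk, hmem, hcopy, hmix⟩ := hstep n
  have e1 : ∑ j, M (n+1) 0 j = M (n+1) 0 j₀ + ∑ j ∈ Finset.univ.erase j₀, M (n+1) 0 j :=
    (Finset.add_sum_erase _ _ (Finset.mem_univ j₀)).symm
  have e2 : ∑ j ∈ Finset.univ.erase j₀, M (n+1) 0 j
      = ∑ j ∈ Finset.univ.erase j₀, M n 0 (ρ j) :=
    Finset.sum_congr rfl fun j hj => hcopy 0 j (Finset.ne_of_mem_erase hj)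
  have e3 : ∑ j ∈ Finset.univ.erase j₀, M n 0 (ρ j)
      = (∑ j, M n 0 (ρ j)) - M n 0 (ρ j₀) :=
    Finset.sum_erase_eq_sub (Finset.mem_univ j₀)
  have e4 : ∑ j, M n 0 (ρ j) = ∑ j, M n 0 j := Equiv.sum_comp ρ (M n 0)
  have h3C : (0:ℝ) < 3*C := by linarith
  have expand : ∑ j, M n 0 j = M n 0 0 + M n 0 1 + M n 0 2 := Fin.sum_univ_three _
  have hrest : ∀ k : Fin 3, 1/(3*C) * (∑ j, M n 0 j) ≤ M n 0 k := by
    intro k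
    rw [div_mul_eq_mul_div, one_mul, div_le_iff₀ h3C, expand]
    have b0 := hb n 0 k
    have b1 := hb n 1 k
    have b2 := hb n 2 k
    nlinarith
  rcases hmem with h | h
  · have : ∑ j, M (n+1) 0 j = (∑ j, M n 0 j) + M n 0 k₂ := by
      rw [e1, e2, e3, e4, hmix 0, h]; ring
    rw [this]
    have := hrest k₂
    nlinarith [hpos n k₂]
  · have : ∑ j, M (n+1) 0 j = (∑ j, M n 0 j) + M n 0 k₁ := by
      rw [e1, e2, e3, e4, hmix 0, h]; ring
    rw [this]
    have := hrest k₁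
    nlinarith [hpos n k₁]

lemma sum_growth_pow {M : ℕ → Matrix (Fin 3) (Fin 3) ℝ} {C : ℝ}
    (hstep : ∀ n, StepRel (M n) (M (n+1))) (hC : 0 < C)
    (hpos : ∀ n j, 0 < M n 0 j) (hb : ∀ n j j', M n 0 j ≤ C * M n 0 j') (a m : ℕ) :
    (1 + 1/(3*C))^m * (∑ j, M a 0 j) ≤ ∑ j, M (a+m) 0 j := by
  have hδ : (0:ℝ) ≤ 1 + 1/(3*C) := by positivity
  induction m with
  | zero => simp
  | succ m IH =>
      have step := sum_growth hstep hC hpos hb (a+m)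
      calc (1 + 1/(3*C))^(m+1) * (∑ j, M a 0 j)
          = (1 + 1/(3*C)) * ((1 + 1/(3*C))^m * (∑ j, M a 0 j)) := by ring
        _ ≤ (1 + 1/(3*C)) * (∑ j, M (a+m) 0 j) := by
            exact mul_le_mul_of_nonneg_left IH hδ
        _ ≤ ∑ j, M (a+m+1) 0 j := step

theorem engine {M : ℕ → Matrix (Fin 3) (Fin 3) ℝ} {C : ℝ}
    (hstep : ∀ n, StepRel (M n) (M (n+1))) (hC : 0 < C)
    (hpos : ∀ n j, 0 < M n 0 j) (hb : ∀ n j j', M n 0 j ≤ C * M n 0 j') :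
    ∃ q : ℝ × ℝ, (⋂ n, tri (M n)) = {q} := by
  have hε : 0 < 1/(1+C) := by positivity
  have hε1 : 1/(1+C) ≤ 1 := by rw [div_le_one (by linarith)]; linarith
  -- sum positivity
  have hSpos : ∀ n, 0 < ∑ j, M n 0 j :=
    fun n => Finset.sum_pos (fun j _ => hpos n j) Finset.univ_nonempty
  -- choose the window length L
  have hone : (1:ℝ) < 1 + 1/(3*C) := by
    have h : (0:ℝ) < 1/(3*C) := by positivity
    linarith
  obtain ⟨L, hL⟩ : ∃ L, 3*C < (1 + 1/(3*C))^L := pow_unbounded_of_one_lt _ hone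
  -- at the end of a window, no first-row entry equals an old one
  have hnb : ∀ a (j c : Fin 3), M (a+L) 0 j ≠ M a 0 c := by
    intro a j c heq
    have h1 : ∑ j', M (a+L) 0 j' ≤ 3*C * M (a+L) 0 j := by
      have b0 := hb (a+L) 0 j
      have b1 := hb (a+L) 1 j
      have b2 := hb (a+L) 2 j
      rw [Fin.sum_univ_three]
      nlinarith
    have h2 := sum_growth_pow hstep hC hpos hb a L
    have h3 : 3*C * (∑ j', M a 0 j') < (1 + 1/(3*C))^L * (∑ j', M a 0 j') :=
      mul_lt_mul_of_pos_right hL (hSpos a)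
    have h4 : M a 0 c ≤ ∑ j', M a 0 j' :=
      Finset.single_le_sum (fun j' _ => (hpos a j').le) (Finset.mem_univ c)
    nlinarith [hpos a c]
  -- pairwise vertex distances
  have hne9 : (Finset.univ : Finset (Fin 3 × Fin 3)).Nonempty := Finset.univ_nonempty
  set dX : ℕ → ℝ := fun n =>
    Finset.univ.sup' hne9 (fun p : Fin 3 × Fin 3 => |vx M n p.1 - vx M n p.2|) with hdX
  set dY : ℕ → ℝ := fun n =>
    Finset.univ.sup' hne9 (fun p : Fin 3 × Fin 3 => |vy M n p.1 - vy M n p.2|) with hdY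
  have hdXle : ∀ n j k, |vx M n j - vx M n k| ≤ dX n := fun n j k =>
    Finset.le_sup' (f := fun p : Fin 3 × Fin 3 => |vx M n p.1 - vx M n p.2|)
      (Finset.mem_univ (j, k))
  have hdYle : ∀ n j k, |vy M n j - vy M n k| ≤ dY n := fun n j k =>
    Finset.le_sup' (f := fun p : Fin 3 × Fin 3 => |vy M n p.1 - vy M n p.2|)
      (Finset.mem_univ (j, k))
  have hdX0 : ∀ n, 0 ≤ dX n := fun n => le_trans (abs_nonneg _) (hdXle n 0 0)
  have hdY0 : ∀ n, 0 ≤ dY n := fun n => le_trans (abs_nonneg _) (hdYle n 0 0)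
  have hεL1 : (1/(1+C))^L ≤ 1 := pow_le_one₀ hε.le hε1
  have hεL0 : 0 < (1/(1+C))^L := pow_pos hε L
  -- one-window contraction
  have hcontr : ∀ a, dX (a+L) ≤ (1 - (1/(1+C))^L) * dX a
      ∧ dY (a+L) ≤ (1 - (1/(1+C))^L) * dY a := by
    intro a
    obtain ⟨W, h1, h2, h3, h4, h4y, h5, h6⟩ := window hstep hC hpos hb a L
    have htwo : ∀ j, ∃ k₁ k₂, k₁ ≠ k₂ ∧ W j k₁ ≠ 0 ∧ W j k₂ ≠ 0 := by
      intro j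
      rcases h5 j with ⟨c, _, hsc⟩ | h
      · exact absurd hsc (hnb a j c)
      · exact h
    have hover : ∀ j j', ∃ k, (1/(1+C))^L ≤ W j k ∧ (1/(1+C))^L ≤ W j' k := by
      intro j j'
      obtain ⟨a₁, a₂, ha, hA1, hA2⟩ := htwo j
      obtain ⟨b₁, b₂, hbne, hB1, hB2⟩ := htwo j'
      rcases fin3_pigeon a₁ a₂ b₁ b₂ ha hbne with h | h | h | h
      · exact ⟨a₁, h3 j a₁ hA1, h ▸ h3 j' b₁ hB1⟩
      · exact ⟨a₁, h3 j a₁ hA1, h ▸ h3 j' b₂ hB2⟩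
      · exact ⟨a₂, h3 j a₂ hA2, h ▸ h3 j' b₁ hB1⟩
      · exact ⟨a₂, h3 j a₂ hA2, h ▸ h3 j' b₂ hB2⟩
    constructor
    · apply Finset.sup'_le
      rintro ⟨j, j'⟩ -
      rw [h4 j, h4 j']
      exact dobrushin (W j) (W j') (vx M a) (h1 j) (h1 j') (h2 j) (h2 j') _ (dX a)
        hεL1 (hover j j') (fun k l => hdXle a k l)
    · apply Finset.sup'_le
      rintro ⟨j, j'⟩ -
      rw [h4y j, h4y j']
      exact dobrushin (W j) (W j') (vy M a) (h1 j) (h1 j') (h2 j) (h2 j') _ (dY a)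
        hεL1 (hover j j') (fun k l => hdYle a k l)
  have hr0 : 0 ≤ 1 - (1/(1+C))^L := by linarith
  have hr1 : 1 - (1/(1+C))^L < 1 := by linarith
  -- iterated contraction
  have hiter : ∀ m, dX (L*m) ≤ (1 - (1/(1+C))^L)^m * dX 0
      ∧ dY (L*m) ≤ (1 - (1/(1+C))^L)^m * dY 0 := by
    intro m
    induction m with
    | zero => simp
    | succ m IH =>
        have h1 := (hcontr (L*m)).1
        have h2 := (hcontr (L*m)).2
        have hLm : L*(m+1) = L*m + L := by ring
        constructor
        · rw [hLm]
          calc dX (L*m + L) ≤ (1 - (1/(1+C))^L) * dX (L*m) := h1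
            _ ≤ (1 - (1/(1+C))^L) * ((1 - (1/(1+C))^L)^m * dX 0) :=
                mul_le_mul_of_nonneg_left IH.1 hr0
            _ = (1 - (1/(1+C))^L)^(m+1) * dX 0 := by ring
        · rw [hLm]
          calc dY (L*m + L) ≤ (1 - (1/(1+C))^L) * dY (L*m) := h2
            _ ≤ (1 - (1/(1+C))^L) * ((1 - (1/(1+C))^L)^m * dY 0) :=
                mul_le_mul_of_nonneg_left IH.2 hr0
            _ = (1 - (1/(1+C))^L)^(m+1) * dY 0 := by ring
  -- the triangles are nested
  have hnest : ∀ n, tri (M (n+1)) ⊆ tri (M n) := by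
    intro n
    obtain ⟨ρ, j₀, k₁, k₂, hk, hmem, hcopy, hmix⟩ := hstep n
    apply convexHull_min ?_ (convex_convexHull ℝ _)
    rintro p ⟨j, rfl⟩
    by_cases hj : j = j₀
    · rw [hj]
      have hs₁ : 0 < M n 0 k₁ := hpos _ _
      have hs₂ : 0 < M n 0 k₂ := hpos _ _
      have hsum : 0 < M n 0 k₁ + M n 0 k₂ := by linarith
      set t : ℝ := M n 0 k₁ / (M n 0 k₁ + M n 0 k₂) with htdef
      have ht0 : 0 ≤ t := by positivity
      have ht1 : 0 ≤ 1 - t := by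
        rw [htdef, sub_nonneg, div_le_one hsum]; linarith
      have hxy : ((M (n+1) 1 j₀ / M (n+1) 0 j₀, M (n+1) 2 j₀ / M (n+1) 0 j₀) : ℝ × ℝ)
          = t • ((M n 1 k₁ / M n 0 k₁, M n 2 k₁ / M n 0 k₁) : ℝ × ℝ)
            + (1-t) • ((M n 1 k₂ / M n 0 k₂, M n 2 k₂ / M n 0 k₂) : ℝ × ℝ) := by
        rw [hmix 0, hmix 1, hmix 2, htdef]
        rw [Prod.smul_mk, Prod.smul_mk, Prod.mk_add_mk, Prod.mk.injEq]
        constructor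
        · rw [smul_eq_mul, smul_eq_mul]; field_simp; ring
        · rw [smul_eq_mul, smul_eq_mul]; field_simp; ring
      rw [hxy]
      have hm1 : ((M n 1 k₁ / M n 0 k₁, M n 2 k₁ / M n 0 k₁) : ℝ × ℝ)
          ∈ {p : ℝ × ℝ | ∃ j : Fin 3, p = (M n 1 j / M n 0 j, M n 2 j / M n 0 j)} := ⟨k₁, rfl⟩
      have hm2 : ((M n 1 k₂ / M n 0 k₂, M n 2 k₂ / M n 0 k₂) : ℝ × ℝ)
          ∈ {p : ℝ × ℝ | ∃ j : Fin 3, p = (M n 1 j / M n 0 j, M n 2 j / M n 0 j)} := ⟨k₂, rfl⟩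
      exact (convex_convexHull ℝ _)
        (subset_convexHull ℝ _ hm1) (subset_convexHull ℝ _ hm2)
        ht0 ht1 (by ring)
    · apply subset_convexHull ℝ _
      refine ⟨ρ j, ?_⟩
      rw [hcopy 0 j hj, hcopy 1 j hj, hcopy 2 j hj]
  -- compactness and nonemptiness
  have hfin : ∀ n, Set.Finite {p : ℝ × ℝ | ∃ j : Fin 3, p = (M n 1 j / M n 0 j, M n 2 j / M n 0 j)} := by
    intro n
    have : {p : ℝ × ℝ | ∃ j : Fin 3, p = (M n 1 j / M n 0 j, M n 2 j / M n 0 j)}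
        = Set.range (fun j : Fin 3 => ((M n 1 j / M n 0 j, M n 2 j / M n 0 j) : ℝ × ℝ)) := by
      ext p; simp [eq_comm]
    rw [this]
    exact Set.finite_range _
  have hcompact : ∀ n, IsCompact (tri (M n)) := fun n => (hfin n).isCompact_convexHull ℝ
  have hnonempty : ∀ n, (tri (M n)).Nonempty :=
    fun n => ⟨_, subset_convexHull ℝ _ ⟨0, rfl⟩⟩
  obtain ⟨q, hq⟩ := IsCompact.nonempty_iInter_of_sequence_nonempty_isCompact_isClosed
    (fun n => tri (M n)) hnest hnonempty (hcompact 0) (fun n => (hcompact n).isClosed)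
  -- coordinates of points in a triangle differ by at most dX/dY
  have hbox : ∀ n, ∀ p' ∈ tri (M n), ∀ q' ∈ tri (M n),
      |p'.1 - q'.1| ≤ dX n ∧ |p'.2 - q'.2| ≤ dY n := by
    intro n p' hp' q' hq'
    have hne3 : (Finset.univ : Finset (Fin 3)).Nonempty := Finset.univ_nonempty
    have hsub : tri (M n) ⊆ (Set.Icc (Finset.univ.inf' hne3 (vx M n)) (Finset.univ.sup' hne3 (vx M n)))
        ×ˢ (Set.Icc (Finset.univ.inf' hne3 (vy M n)) (Finset.univ.sup' hne3 (vy M n))) := by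
      apply convexHull_min ?_ ((convex_Icc _ _).prod (convex_Icc _ _))
      rintro p ⟨j, rfl⟩
      constructor
      · exact Set.mem_Icc.mpr ⟨Finset.inf'_le (vx M n) (Finset.mem_univ j),
          Finset.le_sup' (vx M n) (Finset.mem_univ j)⟩
      · exact Set.mem_Icc.mpr ⟨Finset.inf'_le (vy M n) (Finset.mem_univ j),
          Finset.le_sup' (vy M n) (Finset.mem_univ j)⟩
    have hp1 := (Set.mem_prod.mp (hsub hp')).1
    have hp2 := (Set.mem_prod.mp (hsub hp')).2
    have hq1 := (Set.mem_prod.mp (hsub hq')).1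
    have hq2 := (Set.mem_prod.mp (hsub hq')).2
    rw [Set.mem_Icc] at hp1 hp2 hq1 hq2
    obtain ⟨jx, -, hjx⟩ := Finset.exists_mem_eq_sup' hne3 (vx M n)
    obtain ⟨jx', -, hjx'⟩ := Finset.exists_mem_eq_inf' hne3 (vx M n)
    obtain ⟨jy, -, hjy⟩ := Finset.exists_mem_eq_sup' hne3 (vy M n)
    obtain ⟨jy', -, hjy'⟩ := Finset.exists_mem_eq_inf' hne3 (vy M n)
    have hwx : Finset.univ.sup' hne3 (vx M n) - Finset.univ.inf' hne3 (vx M n) ≤ dX n := by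
      rw [hjx, hjx']
      exact le_trans (le_abs_self _) (hdXle n jx jx')
    have hwy : Finset.univ.sup' hne3 (vy M n) - Finset.univ.inf' hne3 (vy M n) ≤ dY n := by
      rw [hjy, hjy']
      exact le_trans (le_abs_self _) (hdYle n jy jy')
    constructor
    · rw [abs_sub_le_iff]
      exact ⟨by linarith [hp1.1, hp1.2, hq1.1, hq1.2], by linarith [hp1.1, hp1.2, hq1.1, hq1.2]⟩
    · rw [abs_sub_le_iff]
      exact ⟨by linarith [hp2.1, hp2.2, hq2.1, hq2.2], by linarith [hp2.1, hp2.2, hq2.1, hq2.2]⟩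
  refine ⟨q, ?_⟩
  rw [Set.eq_singleton_iff_unique_mem]
  refine ⟨hq, ?_⟩
  intro p hp
  have hmem : ∀ n, p ∈ tri (M n) := fun n => Set.mem_iInter.mp hp n
  have hmemq : ∀ n, q ∈ tri (M n) := fun n => Set.mem_iInter.mp hq n
  set R := max (dX 0) (dY 0) with hR
  have hR0 : 0 ≤ R := le_trans (hdX0 0) (le_max_left _ _)
  have hdist : ∀ m : ℕ, dist p q ≤ (1 - (1/(1+C))^L)^m * R := by
    intro m
    obtain ⟨hbx, hby⟩ := hbox (L*m) p (hmem (L*m)) q (hmemq (L*m))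
    have h1 := (hiter m).1
    have h2 := (hiter m).2
    rw [Prod.dist_eq]
    have hrm : 0 ≤ (1 - (1/(1+C))^L)^m := pow_nonneg hr0 m
    apply max_le
    · rw [Real.dist_eq]
      calc |p.1 - q.1| ≤ dX (L*m) := hbx
        _ ≤ (1 - (1/(1+C))^L)^m * dX 0 := h1
        _ ≤ (1 - (1/(1+C))^L)^m * R := mul_le_mul_of_nonneg_left (le_max_left _ _) hrm
    · rw [Real.dist_eq]
      calc |p.2 - q.2| ≤ dY (L*m) := hby
        _ ≤ (1 - (1/(1+C))^L)^m * dY 0 := h2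
        _ ≤ (1 - (1/(1+C))^L)^m * R := mul_le_mul_of_nonneg_left (le_max_right _ _) hrm
  have hlim : Filter.Tendsto (fun m : ℕ => (1 - (1/(1+C))^L)^m * R) Filter.atTop (nhds 0) := by
    have := (tendsto_pow_atTop_nhds_zero_of_lt_one hr0 hr1).mul_const R
    rwa [zero_mul] at this
  have : dist p q ≤ 0 := ge_of_tendsto hlim (Filter.Eventually.of_forall hdist)
  exact dist_le_zero.mp this

/-- Theorem 7.2: if the ratios of the first-row entries of the matrices
`Mₙ = B·F_{0,i₀}⋯F_{n,iₙ}` are uniformly bounded by a constant `C`, then the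
intersection `Δ(i₀,i₁,…)` is a single point. -/
theorem bounded_ratios_singleton
    (σ τ0 τ1 : ℕ → Equiv.Perm (Fin 3)) (i : ℕ → Fin 2) (C : ℝ) (hC : 0 < C)
    (hbound : ∀ n : ℕ, ∀ j j' : Fin 3,
      prodMat (fun m => Fmat (σ m) (τ0 m) (τ1 m) (i m)) n 0 j ≤
        C * prodMat (fun m => Fmat (σ m) (τ0 m) (τ1 m) (i m)) n 0 j') :
    ∃ q : ℝ × ℝ, DeltaInf (fun m => Fmat (σ m) (τ0 m) (τ1 m) (i m)) = {q} := by
  have hcs : ∀ m, ColStruct (Fmat (σ m) (τ0 m) (τ1 m) (i m)) :=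
    fun m => colStruct_Fmat _ _ _ _
  exact engine (prodMat_stepRel hcs) hC (prodMat_pos hcs) hbound
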